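/- Fix finite index sets N = {1,…,n} (generating units) and T = {1,…,T} (time periods) and, for each i ∈ N, parameters SU^i, RU^i, SD^i, RD^i, m^i, M^i ∈ ℝ with 0 ≤ SU^i ≤ RU^i, 0 ≤ SD^i ≤ RD^i, 0 ≤ m^i ≤ M^i, integers L^i, ℓ^i ≥ 1, start-up costs K^i_k ∈ ℝ, demands D_j and reserves R_j. Let the variables be x^i_j, y^i_j, ȳ^i_j ∈ {0,1} and q^i_j, p^i_j, p̄^i_j ≥ 0 for i ∈ N, j ∈ T, with the boundary convention x^i_0 = 0 and p^i_0 = 0. Let E be the set of all such variable tuples satisfying: (start-up cost) q^i_j ≥ K^i_k (x^i_j - Σ_{h=1}^{k} x^i_{j-h}) for all 1 ≤ k ≤ j-1, j ∈ T, i ∈ N; (logical) y^i_j - ȳ^i_j = x^i_j - x^i_{j-1}; (minimum up) Σ_{j'=max(1, j-L^i+1)}^{j} y^i_{j'} ≤ x^i_j for all j ∈ T; (minimum down) Σ_{j'=max(1, j-ℓ^i+1)}^{j} ȳ^i_{j'} ≤ 1 - x^i_j for all j ∈ T; (ramp-up) p^i_j - p^i_{j-1} ≤ RU^i x^i_{j-1}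 + SU^i y^i_j; (ramp-down) p^i_{j-1} - p^i_j ≤ RD^i x^i_j + SD^i ȳ^i_j; (capacity) m^i x^i_j ≤ p^i_j ≤ p̄^i_j ≤ M^i x^i_j; (demand) Σ_{i∈N} p^i_j ≥ D_j; and (reserve) Σ_{i∈N} p̄^i_j ≥ D_j + R_j. Let G be defined identically except that the ramp-up and ramp-down constraints are replaced by p^i_j - p^i_{j-1} ≤ (RU^i - SU^i) x^i_{j-1} + SU^i x^i_j and p^i_{j-1} - p^i_j ≤ (RD^i - SD^i) x^i_j + SD^i x^i_{j-1}. Then E = G. -/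
import Mathlib


open Finset

/-- A tuple of unit-commitment variables for `n` generating units, indexed by time
`j ∈ ℕ` (time periods are `1, …, T`; index `0` is the boundary convention). -/
structure UCSol (n : ℕ) where
  /-- commitment (on/off) indicators -/
  x : Fin n → ℕ → ℝ
  /-- start-up indicators -/
  y : Fin n → ℕ → ℝ
  /-- shut-down indicators -/
  yb : Fin n → ℕ → ℝ
  /-- linearized start-up costs -/
  q : Fin n → ℕ → ℝ
  /-- power outputs -/
  p : Fin n → ℕ → ℝ
  /-- maximum available power -/
  pb : Fin n → ℕ → ℝ

/-- The constraints of the unit commitment problem common to both formulations: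
boundary convention, binary and nonnegativity domains, start-up cost, logical,
minimum up/down time, capacity, demand and reserve constraints. -/
def UCCommon (n T : ℕ) (K : Fin n → ℕ → ℝ) (L ℓ : Fin n → ℕ) (m M : Fin n → ℝ)
    (D R : ℕ → ℝ) (v : UCSol n) : Prop :=
  (∀ i, v.x i 0 = 0) ∧ (∀ i, v.p i 0 = 0) ∧
  (∀ i, ∀ j ∈ Icc 1 T,
    (v.x i j = 0 ∨ v.x i j = 1) ∧ (v.y i j = 0 ∨ v.y i j = 1) ∧
    (v.yb i j = 0 ∨ v.yb i j = 1) ∧ 0 ≤ v.q i j ∧ 0 ≤ v.p i j ∧ 0 ≤ v.pb i j) ∧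
  (∀ i, ∀ j ∈ Icc 1 T, ∀ k ∈ Icc 1 (j - 1),
    v.q i j ≥ K i k * (v.x i j - ∑ h ∈ Icc 1 k, v.x i (j - h))) ∧
  (∀ i, ∀ j ∈ Icc 1 T, v.y i j - v.yb i j = v.x i j - v.x i (j - 1)) ∧
  (∀ i, ∀ j ∈ Icc 1 T, ∑ j' ∈ Icc (j - L i + 1) j, v.y i j' ≤ v.x i j) ∧
  (∀ i, ∀ j ∈ Icc 1 T, ∑ j' ∈ Icc (j - ℓ i + 1) j, v.yb i j' ≤ 1 - v.x i j) ∧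
  (∀ i, ∀ j ∈ Icc 1 T,
    m i * v.x i j ≤ v.p i j ∧ v.p i j ≤ v.pb i j ∧ v.pb i j ≤ M i * v.x i j) ∧
  (∀ j ∈ Icc 1 T, ∑ i, v.p i j ≥ D j) ∧
  (∀ j ∈ Icc 1 T, ∑ i, v.pb i j ≥ D j + R j)

/-- The original ramp-up and ramp-down constraints. -/
def UCRampOrig (n T : ℕ) (SU RU SD RD : Fin n → ℝ) (v : UCSol n) : Prop :=
  ∀ i, ∀ j ∈ Icc 1 T,
    v.p i j - v.p i (j - 1) ≤ RU i * v.x i (j - 1) + SU i * v.y i j ∧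
    v.p i (j - 1) - v.p i j ≤ RD i * v.x i j + SD i * v.yb i j

/-- The substituted ramp-up and ramp-down constraints (no start-up/shut-down variables). -/
def UCRampSubst (n T : ℕ) (SU RU SD RD : Fin n → ℝ) (v : UCSol n) : Prop :=
  ∀ i, ∀ j ∈ Icc 1 T,
    v.p i j - v.p i (j - 1) ≤ (RU i - SU i) * v.x i (j - 1) + SU i * v.x i j ∧
    v.p i (j - 1) - v.p i j ≤ (RD i - SD i) * v.x i j + SD i * v.x i (j - 1)

lemma ramp_iff_aux (SU RU M pj pj1 xj xj1 y yb : ℝ)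
    (hSU : 0 ≤ SU) (hSURU : SU ≤ RU)
    (hxj : xj = 0 ∨ xj = 1) (hxj1 : xj1 = 0 ∨ xj1 = 1)
    (hy : y = 0 ∨ y = 1) (hyb : yb = 0 ∨ yb = 1)
    (hlog : y - yb = xj - xj1)
    (hyx : y ≤ xj) (hybx : yb ≤ 1 - xj)
    (hpj0 : 0 ≤ pj) (hpjM : pj ≤ M * xj)
    (hpj10 : 0 ≤ pj1) (hpj1M : pj1 ≤ M * xj1) :
    (pj - pj1 ≤ RU * xj1 + SU * y) ↔ (pj - pj1 ≤ (RU - SU) * xj1 + SU * xj) := by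
  rcases hxj with rfl | rfl <;> rcases hxj1 with rfl | rfl <;>
    rcases hy with rfl | rfl <;> rcases hyb with rfl | rfl <;>
    constructor <;> intro H <;> nlinarith

/-- Proposition 4: under the standard rate assumptions `0 ≤ SUⁱ ≤ RUⁱ`, `0 ≤ SDⁱ ≤ RDⁱ`
and `0 ≤ mⁱ ≤ Mⁱ`, the feasible region `E` of the unit commitment problem with the
original ramp constraints equals the feasible region `G` with the substituted ramp
constraints. -/
theorem stmt_13 (n T : ℕ) (SU RU SD RD m M : Fin n → ℝ) (L ℓ : Fin n → ℕ)
    (K : Fin n → ℕ → ℝ) (D R : ℕ → ℝ)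
    (hSU0 : ∀ i, 0 ≤ SU i) (hSURU : ∀ i, SU i ≤ RU i)
    (hSD0 : ∀ i, 0 ≤ SD i) (hSDRD : ∀ i, SD i ≤ RD i)
    (hm0 : ∀ i, 0 ≤ m i) (hmM : ∀ i, m i ≤ M i)
    (hL : ∀ i, 1 ≤ L i) (hℓ : ∀ i, 1 ≤ ℓ i) :
    {v : UCSol n | UCCommon n T K L ℓ m M D R v ∧ UCRampOrig n T SU RU SD RD v} =
    {v : UCSol n | UCCommon n T K L ℓ m M D R v ∧ UCRampSubst n T SU RU SD RD v} := by
  ext v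
  simp only [Set.mem_setOf_eq]
  refine and_congr_right fun hc => ?_
  obtain ⟨hx0, hp0, hbin, -, hlog, hup, hdown, hcap, -, -⟩ := hc
  have key : ∀ i, ∀ j ∈ Icc 1 T,
      ((v.p i j - v.p i (j - 1) ≤ RU i * v.x i (j - 1) + SU i * v.y i j ↔
        v.p i j - v.p i (j - 1) ≤ (RU i - SU i) * v.x i (j - 1) + SU i * v.x i j) ∧
       (v.p i (j - 1) - v.p i j ≤ RD i * v.x i j + SD i * v.yb i j ↔
        v.p i (j - 1) - v.p i j ≤ (RD i - SD i) * v.x i j + SD i * v.x i (j - 1))) := by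
    intro i j hj
    obtain ⟨hj1, hjT⟩ := mem_Icc.mp hj
    obtain ⟨hxj, hyj, hybj, -, -, -⟩ := hbin i j hj
    -- x, p facts at j-1
    have hxj1 : v.x i (j - 1) = 0 ∨ v.x i (j - 1) = 1 := by
      rcases Nat.lt_or_ge (j - 1) 1 with h | h
      · left; rw [Nat.lt_one_iff.mp h]; exact hx0 i
      · exact (hbin i (j - 1) (mem_Icc.mpr ⟨h, by omega⟩)).1
    have hMxj : 0 ≤ M i * v.x i j ∧ 0 ≤ M i := by
      constructor
      · rcases hxj with h | h <;> rw [h] <;> nlinarith [hm0 i, hmM i]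
      · exact le_trans (hm0 i) (hmM i)
    have hpfacts : ∀ j' ∈ Icc 1 T, 0 ≤ v.p i j' ∧ v.p i j' ≤ M i * v.x i j' := by
      intro j' hj'
      obtain ⟨h1, h2, h3⟩ := hcap i j' hj'
      exact ⟨(hbin i j' hj').2.2.2.2.1, by linarith⟩
    have hpj : 0 ≤ v.p i j ∧ v.p i j ≤ M i * v.x i j := hpfacts j hj
    have hpj1 : 0 ≤ v.p i (j - 1) ∧ v.p i (j - 1) ≤ M i * v.x i (j - 1) := by
      rcases Nat.lt_or_ge (j - 1) 1 with h | h
      · rw [Nat.lt_one_iff.mp h, hp0 i, hx0 i]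
        simp
      · exact hpfacts (j - 1) (mem_Icc.mpr ⟨h, by omega⟩)
    -- y ≤ x j from minimum-up, yb ≤ 1 - x j from minimum-down
    have hnn : ∀ j' ∈ Icc 1 T, 0 ≤ v.y i j' ∧ 0 ≤ v.yb i j' := by
      intro j' hj'
      obtain ⟨-, hy', hyb', -⟩ := hbin i j' hj'
      constructor
      · rcases hy' with h | h <;> rw [h] <;> norm_num
      · rcases hyb' with h | h <;> rw [h] <;> norm_num
    have hmemL : ∀ (c : ℕ), 1 ≤ c → j ∈ Icc (j - c + 1) j := by
      intro c hcp; exact mem_Icc.mpr ⟨by omega, le_refl j⟩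
    have hsub : ∀ (c : ℕ) (j' : ℕ), j' ∈ Icc (j - c + 1) j → j' ∈ Icc 1 T := by
      intro c j' hj'
      obtain ⟨h1, h2⟩ := mem_Icc.mp hj'
      exact mem_Icc.mpr ⟨by omega, le_trans h2 hjT⟩
    have hyx : v.y i j ≤ v.x i j := by
      refine le_trans ?_ (hup i j hj)
      exact Finset.single_le_sum
        (fun j' hj' => (hnn j' (hsub _ j' hj')).1) (hmemL (L i) (hL i))
    have hybx : v.yb i j ≤ 1 - v.x i j := by
      refine le_trans ?_ (hdown i j hj)
      exact Finset.single_le_sum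
        (fun j' hj' => (hnn j' (hsub _ j' hj')).2) (hmemL (ℓ i) (hℓ i))
    have hlg := hlog i j hj
    constructor
    · exact ramp_iff_aux (SU i) (RU i) (M i) _ _ _ _ _ _ (hSU0 i) (hSURU i)
        hxj hxj1 hyj hybj hlg hyx hybx hpj.1 hpj.2 hpj1.1 hpj1.2
    · exact ramp_iff_aux (SD i) (RD i) (M i) _ _ _ _ _ _ (hSD0 i) (hSDRD i)
        hxj1 hxj hybj hyj (by linarith) (by linarith) (by linarith)
        hpj1.1 hpj1.2 hpj.1 hpj.2
  constructor
  · intro h i j hj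
    exact ⟨((key i j hj).1).mp (h i j hj).1, ((key i j hj).2).mp (h i j hj).2⟩
  · intro h i j hj
    exact ⟨((key i j hj).1).mpr (h i j hj).1, ((key i j hj).2).mpr (h i j hj).2⟩
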